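/- arXiv:1904.01117 — 3 statements merged into one kernel-verified Lean document; each statement's English description precedes it below -/
import Mathlib

section
/- For all expectations f and I, every n ∈ ℕ and every initial state s ∈ Σ, the G_n-measurable function X_n^{f,Φ_f(I)} is a version of the conditional expectation of X_{n+1}^{f,I} given G_n under P_s; that is, for every G ∈ G_n one has ∫_G X_{n+1}^{f,I} dP_s = ∫_G X_n^{f,Φ_f(I)} dP_s (Lebesgue integrals of ℝ≥0∞-valued functions). -/
open MeasureTheory Filter Topology
open scoped Classical ENNReal ENat NNReal

/-! Loop model: states `S`, guard `φ : Set S`, loop-body transition probabilities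
`μ : S → S → ℝ≥0`. Expectations are functions `S → ℝ≥0∞` with the pointwise order. -/

variable {S : Type*}

/-- One-step weakest preexpectation of the loop body:
`wpF μ X s = ∑_{s'} μ s s' * X s'`. -/
noncomputable def wpF (μ : S → S → ℝ≥0) (X : S → ℝ≥0∞) (s : S) : ℝ≥0∞ :=
  ∑' s', (μ s s' : ℝ≥0∞) * X s'

/-- The characteristic function `Φ_f` of the loop `while φ do C` with respect to the
postexpectation `f`. -/
noncomputable def Phi (φ : Set S) (μ : S → S → ℝ≥0) (f : S → ℝ≥0∞)
    (X : S → ℝ≥0∞) (s : S) : ℝ≥0∞ :=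
  if s ∈ φ then wpF μ X s else f s

theorem Phi_mono (φ : Set S) (μ : S → S → ℝ≥0) (f : S → ℝ≥0∞) :
    Monotone (Phi φ μ f) := by
  intro X Y h s
  unfold Phi wpF
  split_ifs with hs
  · exact ENNReal.tsum_le_tsum fun s' => mul_le_mul_right (h s') _
  · exact le_rfl

/-- Least fixed point of the characteristic function `Φ_f`,
i.e. the weakest preexpectation `wp(while φ do C)(f)`. -/
noncomputable def lfpPhi (φ : Set S) (μ : S → S → ℝ≥0) (f : S → ℝ≥0∞) : S → ℝ≥0∞ :=
  OrderHom.lfp ⟨Phi φ μ f, Phi_mono φ μ f⟩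

/-- A finite expectation: `X s < ∞` for all states. -/
def FinExp (X : S → ℝ≥0∞) : Prop := ∀ s, X s < ⊤

/-- A bounded expectation: `X s ≤ c` for some constant `c : ℝ≥0`. -/
def BddExp (X : S → ℝ≥0∞) : Prop := ∃ c : ℝ≥0, ∀ s, X s ≤ (c : ℝ≥0∞)

/-- `I` harmonizes with `f` if `I` agrees with `f` on all terminal states (states
outside the guard). -/
def Harmonizes (φ : Set S) (I f : S → ℝ≥0∞) : Prop := ∀ s ∉ φ, I s = f s

/-- `ΔI`: the expected change of `I` within one loop iteration. -/
noncomputable def dExp (φ : Set S) (μ : S → S → ℝ≥0) (I : S → ℝ≥0∞) (s : S) : ℝ≥0∞ :=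
  if s ∈ φ then ∑' s', (μ s s' : ℝ≥0∞) * ((I s' - I s) ⊔ (I s - I s')) else 0

/-- `I` is conditionally difference bounded if `ΔI` is bounded by a constant. -/
def CondDiffBdd (φ : Set S) (μ : S → S → ℝ≥0) (I : S → ℝ≥0∞) : Prop :=
  ∃ c : ℝ≥0, ∀ s, dExp φ μ I s ≤ (c : ℝ≥0∞)

/-! The loop space `Ω := ℕ → S` with its product σ-algebra (`S` discrete). -/

/-- The cylinder set of a finite sequence of states. -/
def Cyl (π : List S) : Set (ℕ → S) := {ϑ | ∀ i : Fin π.length, ϑ i = π.get i}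

/-- The σ-algebra `F_n`, generated by the cylinder sets of sequences of length `n+1`. -/
def Fn (n : ℕ) : MeasurableSpace (ℕ → S) :=
  MeasurableSpace.generateFrom {A | ∃ π : List S, π.length = n + 1 ∧ A = Cyl π}

/-- The shifted filtration `G_n := F_{n+1}`. -/
def Gn (n : ℕ) : MeasurableSpace (ℕ → S) := Fn (n + 1)

/-- One-step transition probability of the loop: from a state `a` inside the guard move
according to `μ`; a state outside the guard is absorbing. -/
noncomputable def stepP (φ : Set S) (μ : S → S → ℝ≥0) (a b : S) : ℝ≥0 :=
  if a ∈ φ then μ a b else if b = a then 1 else 0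

/-- Product of the one-step transition probabilities along a finite sequence. -/
noncomputable def chainP (φ : Set S) (μ : S → S → ℝ≥0) : List S → ℝ≥0
  | [] => 1
  | [_] => 1
  | a :: b :: rest => stepP φ μ a b * chainP φ μ (b :: rest)

/-- The prefix probability `p_s(π)` of the finite sequence `π` of states, starting the
loop in the state `s`. -/
noncomputable def prefP (φ : Set S) (μ : S → S → ℝ≥0) (s : S) (π : List S) : ℝ≥0 :=
  (if π.head? = some s then 1 else 0) * chainP φ μ π

/-- The looping time `τ`: the first time the run leaves the guard. -/
noncomputable def loopT (φ : Set S) (ϑ : ℕ → S) : ℕ∞ :=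
  sInf {n : ℕ∞ | ∃ m : ℕ, n = (m : ℕ∞) ∧ ϑ m ∉ φ}

/-- The stochastic process `X_n^{f,I}` induced by the invariant `I` (w.r.t. the
postexpectation `f`). -/
noncomputable def Xn (φ : Set S) (f I : S → ℝ≥0∞) (n : ℕ) (ϑ : ℕ → S) : ℝ≥0∞ :=
  if loopT φ ϑ ≤ (n : ℕ∞) then f (ϑ (loopT φ ϑ).toNat) else I (ϑ (n + 1))

/-- The stopped process `X_τ^f`. -/
noncomputable def Xstop (φ : Set S) (f : S → ℝ≥0∞) (ϑ : ℕ → S) : ℝ≥0∞ :=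
  if loopT φ ϑ < ⊤ then f (ϑ (loopT φ ϑ).toNat) else 0

section AuxLemmas

variable {S : Type*}

lemma loopT_eq_of (φ : Set S) (ϑ : ℕ → S) {k : ℕ} (hk : ϑ k ∉ φ)
    (hmin : ∀ i < k, ϑ i ∈ φ) : loopT φ ϑ = (k : ℕ∞) := by
  apply le_antisymm
  · exact sInf_le ⟨k, rfl, hk⟩
  · refine le_sInf ?_
    rintro x ⟨m, rfl, hm⟩
    have : k ≤ m := by
      by_contra h
      exact hm (hmin m (by omega))
    exact_mod_cast this

lemma loopT_not_le (φ : Set S) (ϑ : ℕ → S) (n : ℕ) (h : ∀ i ≤ n, ϑ i ∈ φ) :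
    ¬ loopT φ ϑ ≤ (n : ℕ∞) := by
  classical
  intro hle
  by_cases hx : ∃ m, ϑ m ∉ φ
  · have hk : ϑ (Nat.find hx) ∉ φ := Nat.find_spec hx
    have hmin : ∀ i < Nat.find hx, ϑ i ∈ φ := fun i hi => not_not.mp (Nat.find_min hx hi)
    rw [loopT_eq_of φ ϑ hk hmin] at hle
    have : Nat.find hx ≤ n := by exact_mod_cast hle
    exact hk (h _ this)
  · push_neg at hx
    have hempty : {x : ℕ∞ | ∃ m : ℕ, x = (m : ℕ∞) ∧ ϑ m ∉ φ} = ∅ := by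
      ext x
      simp only [Set.mem_setOf_eq, Set.mem_empty_iff_false, iff_false, not_exists]
      rintro m ⟨rfl, hm⟩
      exact hm (hx m)
    rw [loopT, hempty, sInf_empty] at hle
    simp at hle

lemma Xn_exit (φ : Set S) (f J : S → ℝ≥0∞) (n : ℕ) (ϑ : ℕ → S) {k : ℕ}
    (hkn : k ≤ n) (hk : ϑ k ∉ φ) (hmin : ∀ i < k, ϑ i ∈ φ) :
    Xn φ f J n ϑ = f (ϑ k) := by
  unfold Xn
  rw [loopT_eq_of φ ϑ hk hmin, if_pos (by exact_mod_cast hkn)]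
  simp

lemma Xn_noexit (φ : Set S) (f J : S → ℝ≥0∞) (n : ℕ) (ϑ : ℕ → S)
    (h : ∀ i ≤ n, ϑ i ∈ φ) : Xn φ f J n ϑ = J (ϑ (n + 1)) := by
  unfold Xn
  rw [if_neg (loopT_not_le φ ϑ n h)]

lemma Xn_congr (φ : Set S) (f J : S → ℝ≥0∞) (n : ℕ) {ϑ ϑ' : ℕ → S}
    (h : ∀ i ≤ n + 1, ϑ i = ϑ' i) : Xn φ f J n ϑ = Xn φ f J n ϑ' := by
  classical
  by_cases hx : ∃ m, m ≤ n ∧ ϑ m ∉ φ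
  · obtain ⟨m, hmn, hm⟩ := hx
    have hex : ∃ j, ϑ j ∉ φ := ⟨m, hm⟩
    have hk : ϑ (Nat.find hex) ∉ φ := Nat.find_spec hex
    have hkn : Nat.find hex ≤ n := le_trans (Nat.find_le hm) hmn
    have hmin : ∀ i < Nat.find hex, ϑ i ∈ φ := fun i hi => not_not.mp (Nat.find_min hex hi)
    have hk' : ϑ' (Nat.find hex) ∉ φ := by rw [← h _ (by omega)]; exact hk
    have hmin' : ∀ i < Nat.find hex, ϑ' i ∈ φ := fun i hi => by
      rw [← h i (by omega)]; exact hmin i hi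
    rw [Xn_exit φ f J n ϑ hkn hk hmin, Xn_exit φ f J n ϑ' hkn hk' hmin',
      h _ (by omega)]
  · push_neg at hx
    have hx' : ∀ i ≤ n, ϑ' i ∈ φ := fun i hi => by rw [← h i (by omega)]; exact hx i hi
    rw [Xn_noexit φ f J n ϑ hx, Xn_noexit φ f J n ϑ' hx', h (n + 1) le_rfl]

lemma chainP_append (φ : Set S) (μ : S → S → ℝ≥0) :
    ∀ (l : List S) (hl : l ≠ []) (b : S),
      chainP φ μ (l ++ [b]) = chainP φ μ l * stepP φ μ (l.getLast hl) b
  | [], hl, b => absurd rfl hl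
  | [a], _, b => by simp [chainP]
  | (a :: c :: rest), _, b => by
    have ih := chainP_append φ μ (c :: rest) (by simp) b
    simp only [List.cons_append] at ih ⊢
    rw [show chainP φ μ (a :: c :: (rest ++ [b])) =
        stepP φ μ a c * chainP φ μ (c :: (rest ++ [b])) from rfl,
      show chainP φ μ (a :: c :: rest) = stepP φ μ a c * chainP φ μ (c :: rest) from rfl]
    rw [show (c :: (rest ++ [b])) = (c :: rest) ++ [b] from rfl] at *
    rw [ih, List.getLast_cons (by simp : (c :: rest) ≠ [])]
    ring

lemma prefP_append (φ : Set S) (μ : S → S → ℝ≥0) (s : S) (l : List S) (hl : l ≠ [])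
    (b : S) :
    prefP φ μ s (l ++ [b]) = prefP φ μ s l * stepP φ μ (l.getLast hl) b := by
  unfold prefP
  rw [List.head?_append, chainP_append φ μ l hl b]
  have hh : l.head?.or ([b] : List S).head? = l.head? := by
    cases l with
    | nil => exact absurd rfl hl
    | cons a t => rfl
  rw [hh]
  ring

/-- Projection to the first `m` coordinates. -/
def projN (m : ℕ) : (ℕ → S) → (Fin m → S) := fun ϑ i => ϑ i

lemma preimage_singleton_eq_cyl (m : ℕ) (v : Fin m → S) :
    projN m ⁻¹' {v} = Cyl (List.ofFn v) := by
  ext ϑ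
  simp only [Set.mem_preimage, Set.mem_singleton_iff, funext_iff, Cyl, Set.mem_setOf_eq,
    projN]
  constructor
  · intro h i
    rw [List.get_ofFn]
    exact h (Fin.cast (List.length_ofFn : (List.ofFn v).length = m) i)
  · intro h i
    have h2 := h (Fin.cast (List.length_ofFn : (List.ofFn v).length = m).symm i)
    rw [List.get_ofFn] at h2
    have h3 : Fin.cast (List.length_ofFn : (List.ofFn v).length = m) (Fin.cast (List.length_ofFn : (List.ofFn v).length = m).symm i) = i := by
      ext; rfl
    rw [h3] at h2
    exact h2

lemma measurableSet_projN_preimage [Countable S] [MeasurableSpace S]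
    [DiscreteMeasurableSpace S] (m : ℕ) (A : Set (Fin m → S)) :
    MeasurableSet (projN (S := S) m ⁻¹' A) := by
  have hm : Measurable (projN (S := S) m) :=
    measurable_pi_lambda _ fun i => measurable_pi_apply _
  exact hm (A.to_countable.measurableSet)

lemma gn_measurableSet_preimage [Countable S] (n : ℕ) (A : Set (Fin (n + 2) → S)) :
    MeasurableSet[Gn n] (projN (S := S) (n + 2) ⁻¹' A) := by
  rw [← Set.iUnion_of_singleton_coe A, Set.preimage_iUnion]
  refine MeasurableSet.iUnion fun v => ?_
  rw [preimage_singleton_eq_cyl]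
  exact MeasurableSpace.measurableSet_generateFrom
    ⟨List.ofFn (v : Fin (n + 2) → S), by simp, rfl⟩

lemma gn_eq_preimage {n : ℕ} {G : Set (ℕ → S)} (hG : MeasurableSet[Gn n] G) :
    ∃ A : Set (Fin (n + 2) → S), G = projN (n + 2) ⁻¹' A := by
  have hle : Gn (S := S) n ≤ MeasurableSpace.comap (projN (n + 2)) ⊤ := by
    refine MeasurableSpace.generateFrom_le ?_
    rintro B ⟨π, hπ, rfl⟩
    refine ⟨{w | List.ofFn w = π}, trivial, ?_⟩
    ext ϑ
    simp only [Set.mem_preimage, Set.mem_setOf_eq]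
    constructor
    · intro h
      have hmem : ϑ ∈ Cyl (List.ofFn (projN (n + 2) ϑ)) := by
        rw [← preimage_singleton_eq_cyl]
        exact rfl
      rw [h] at hmem
      exact hmem
    · intro h
      refine List.ext_get (by simp [hπ]) ?_
      intro i h1 h2
      rw [List.get_ofFn]
      exact h ⟨i, h2⟩
  obtain ⟨A, -, hA⟩ := MeasurableSpace.measurableSet_comap.mp (hle _ hG)
  exact ⟨A, hA.symm⟩

lemma tsum_stepP_coe [Countable S] (φ : Set S) (μ : S → S → ℝ≥0)
    (hμ : ∀ s, ∑' s', μ s s' = 1) (a : S) :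
    ∑' s', (stepP φ μ a s' : ℝ≥0∞) = 1 := by
  classical
  by_cases ha : a ∈ φ
  · simp only [stepP, if_pos ha]
    have hsum : Summable (μ a) := by
      by_contra hns
      have := hμ a
      rw [tsum_eq_zero_of_not_summable hns] at this
      exact zero_ne_one this
    rw [← ENNReal.coe_tsum hsum, hμ a, ENNReal.coe_one]
  · simp only [stepP, if_neg ha]
    have h1 : ∀ s' : S, (((if s' = a then 1 else 0 : ℝ≥0)) : ℝ≥0∞)
        = if s' = a then (1 : ℝ≥0∞) else 0 := by
      intro s'; split_ifs <;> simp
    rw [tsum_congr h1, tsum_ite_eq]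

end AuxLemmas

lemma key_cyl_eq {S : Type*} [Countable S] [MeasurableSpace S] [DiscreteMeasurableSpace S]
    (φ : Set S) (μ : S → S → ℝ≥0) (hμ : ∀ s, ∑' s', μ s s' = 1)
    (P : S → Measure (ℕ → S))
    (hPC : ∀ (s : S) (π : List S), π ≠ [] → P s (Cyl π) = (prefP φ μ s π : ℝ≥0∞))
    (f I : S → ℝ≥0∞) (n : ℕ) (s : S) (v : Fin (n + 2) → S) :
    ∫⁻ ϑ in projN (n + 2) ⁻¹' {v}, Xn φ f I (n + 1) ϑ ∂(P s) =
      ∫⁻ ϑ in projN (n + 2) ⁻¹' {v}, Xn φ f (Phi φ μ f I) n ϑ ∂(P s) := by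
  classical
  set q : ℕ → S := fun i => if h : i < n + 2 then v ⟨i, h⟩ else v ⟨0, by omega⟩ with hqdef
  set qs : S → ℕ → S := fun s' i => if i = n + 2 then s' else q i with hqsdef
  -- the integral of `Xn φ f J k` over a length-`m` cylinder is a constant times its measure
  have hconst : ∀ (m : ℕ) (J : S → ℝ≥0∞) (k : ℕ) (hkm : k + 2 ≤ m) (w : Fin m → S)
      (q' : ℕ → S), (∀ i (hi : i ≤ k + 1), q' i = w (⟨i, by omega⟩ : Fin m)) →
      ∫⁻ ϑ in projN m ⁻¹' {w}, Xn φ f J k ϑ ∂(P s)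
        = Xn φ f J k q' * P s (projN m ⁻¹' {w}) := by
    intro m J k hk w q' hq'
    have hcongr : ∀ ϑ ∈ projN (S := S) m ⁻¹' {w}, Xn φ f J k ϑ = Xn φ f J k q' := by
      intro ϑ hϑ
      refine Xn_congr φ f J k fun i hi => ?_
      rw [hq' i hi]
      exact congrFun (show projN m ϑ = w from hϑ) ⟨i, by omega⟩
    rw [setLIntegral_congr_fun (measurableSet_projN_preimage m {w}) hcongr,
      setLIntegral_const]
  -- agreement of `q` with `v`
  have hqv : ∀ i (hi : i ≤ n + 1), q i = v (⟨i, by omega⟩ : Fin (n + 2)) := by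
    intro i hi
    simp only [hqdef]
    rw [dif_pos (by omega : i < n + 2)]
  -- RHS
  have hRHS := hconst (n + 2) (Phi φ μ f I) n le_rfl v q hqv
  -- split the cylinder according to the state at time n+2
  have hsplit : projN (S := S) (n + 2) ⁻¹' {v}
      = ⋃ s' : S, projN (n + 3) ⁻¹' {Fin.snoc v s'} := by
    ext ϑ
    simp only [Set.mem_preimage, Set.mem_singleton_iff, Set.mem_iUnion]
    constructor
    · intro h
      refine ⟨ϑ (n + 2), funext fun i => ?_⟩
      by_cases h' : (i : ℕ) < n + 2
      · have hi : i = Fin.castSucc ⟨(i : ℕ), h'⟩ := by ext; rfl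
        rw [hi, Fin.snoc_castSucc]
        exact congrFun h ⟨(i : ℕ), h'⟩
      · have hi : i = Fin.last (n + 2) := by ext; simp; omega
        rw [hi, Fin.snoc_last]
        rfl
    · rintro ⟨s', h⟩
      funext i
      have h2 := congrFun h (Fin.castSucc i)
      rw [Fin.snoc_castSucc] at h2
      exact h2
  have hdisj : Pairwise (Function.onFun Disjoint fun s' : S =>
      projN (S := S) (n + 3) ⁻¹' {Fin.snoc v s'}) := by
    intro a b hab
    simp only [Function.onFun, Set.disjoint_left]
    intro ϑ h1 h2
    apply hab
    have h1' : projN (n + 3) ϑ = Fin.snoc v a := h1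
    have h2' : projN (n + 3) ϑ = Fin.snoc v b := h2
    have := h1'.symm.trans h2'
    have := congrFun this (Fin.last (n + 2))
    rwa [Fin.snoc_last, Fin.snoc_last] at this
  -- constants on each small cylinder
  have hqs : ∀ s' : S, ∀ i (hi : i ≤ n + 2), qs s' i = (Fin.snoc v s' : Fin (n + 3) → S) (⟨i, by omega⟩ : Fin (n + 3)) := by
    intro s' i hi
    by_cases h' : i < n + 2
    · have hfin : (⟨i, by omega⟩ : Fin (n + 3)) = Fin.castSucc ⟨i, h'⟩ := rfl
      rw [hfin, Fin.snoc_castSucc]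
      simp only [hqsdef]
      rw [if_neg (by omega)]
      exact hqv i (by omega)
    · have hieq : i = n + 2 := by omega
      subst hieq
      have hfin : (⟨n + 2, by omega⟩ : Fin (n + 3)) = Fin.last (n + 2) := rfl
      rw [hfin, Fin.snoc_last]
      simp [hqsdef]
  have hLHSterm : ∀ s' : S,
      ∫⁻ ϑ in projN (n + 3) ⁻¹' {Fin.snoc v s'}, Xn φ f I (n + 1) ϑ ∂(P s)
        = Xn φ f I (n + 1) (qs s') * P s (projN (n + 3) ⁻¹' {Fin.snoc v s'}) :=
    fun s' => hconst (n + 3) I (n + 1) (by omega) (Fin.snoc v s') (qs s') (hqs s')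
  -- measures of cylinders
  have hofne : (List.ofFn v) ≠ [] := by
    intro h
    have := congrArg List.length h
    simp at this
  have hPv : P s (projN (S := S) (n + 2) ⁻¹' {v}) = (prefP φ μ s (List.ofFn v) : ℝ≥0∞) := by
    rw [preimage_singleton_eq_cyl]
    exact hPC s _ hofne
  have hofsnoc : ∀ s' : S, List.ofFn (Fin.snoc v s') = List.ofFn v ++ [s'] := by
    intro s'
    rw [List.ofFn_succ' (Fin.snoc v s'), Fin.snoc_last, List.concat_eq_append]
    congr 1
    exact congrArg List.ofFn (funext fun i => Fin.snoc_castSucc _ _ _)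
  have hPvs : ∀ s' : S, P s (projN (S := S) (n + 3) ⁻¹' {Fin.snoc v s'})
      = (prefP φ μ s (List.ofFn v ++ [s']) : ℝ≥0∞) := by
    intro s'
    rw [preimage_singleton_eq_cyl, hofsnoc s']
    exact hPC s _ (by simp)
  -- prefix probability factorization
  have hlast : (List.ofFn v).getLast hofne = q (n + 1) := by
    rw [List.getLast_eq_getElem, List.getElem_ofFn, hqv (n + 1) le_rfl]
    congr 1
    ext
    simp
  have hpre : ∀ s' : S, (prefP φ μ s (List.ofFn v ++ [s']) : ℝ≥0∞)
      = (prefP φ μ s (List.ofFn v) : ℝ≥0∞) * (stepP φ μ (q (n + 1)) s' : ℝ≥0∞) := by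
    intro s'
    rw [prefP_append φ μ s _ hofne, hlast]
    push_cast
    ring
  -- put everything together
  rw [hRHS, hPv, hsplit, lintegral_iUnion (fun s' => measurableSet_projN_preimage _ _) hdisj]
  simp only [hLHSterm, hPvs, hpre]
  set p : ℝ≥0∞ := (prefP φ μ s (List.ofFn v) : ℝ≥0∞) with hp
  have hstep := tsum_stepP_coe φ μ hμ (q (n + 1))
  by_cases hA : ∃ m, m ≤ n ∧ q m ∉ φ
  · obtain ⟨m, hmn, hm⟩ := hA
    have hex : ∃ j, q j ∉ φ := ⟨m, hm⟩
    have hk : q (Nat.find hex) ∉ φ := Nat.find_spec hex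
    have hkn : Nat.find hex ≤ n := le_trans (Nat.find_le hm) hmn
    have hmin : ∀ i < Nat.find hex, q i ∈ φ := fun i hi => not_not.mp (Nat.find_min hex hi)
    have hYq : Xn φ f (Phi φ μ f I) n q = f (q (Nat.find hex)) :=
      Xn_exit φ f _ n q hkn hk hmin
    have hqsk : ∀ s', qs s' (Nat.find hex) = q (Nat.find hex) := by
      intro s'; simp only [hqsdef]; rw [if_neg (by omega)]
    have hXqs : ∀ s', Xn φ f I (n + 1) (qs s') = f (q (Nat.find hex)) := by
      intro s'
      rw [Xn_exit φ f I (n + 1) (qs s') (k := Nat.find hex) (by omega) (by rw [hqsk s']; exact hk)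
        (fun i hi => by simp only [hqsdef]; rw [if_neg (by omega)]; exact hmin i hi),
        hqsk s']
    rw [hYq]
    simp only [hXqs]
    calc ∑' s', f (q (Nat.find hex)) * (p * (stepP φ μ (q (n + 1)) s' : ℝ≥0∞))
        = (f (q (Nat.find hex)) * p) * ∑' s', (stepP φ μ (q (n + 1)) s' : ℝ≥0∞) := by
          rw [← ENNReal.tsum_mul_left]; exact tsum_congr fun s' => by ring
      _ = f (q (Nat.find hex)) * p := by rw [hstep, mul_one]
  · push_neg at hA
    have hYq : Xn φ f (Phi φ μ f I) n q = Phi φ μ f I (q (n + 1)) :=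
      Xn_noexit φ f _ n q hA
    have hqsq : ∀ s' i, i ≤ n + 1 → qs s' i = q i := by
      intro s' i hi; simp only [hqsdef]; rw [if_neg (by omega)]
    by_cases hg : q (n + 1) ∈ φ
    · have hXqs : ∀ s', Xn φ f I (n + 1) (qs s') = I s' := by
        intro s'
        have hall : ∀ i ≤ n + 1, qs s' i ∈ φ := by
          intro i hi
          rw [hqsq s' i hi]
          rcases Nat.lt_or_ge i (n + 1) with h | h
          · exact hA i (by omega)
          · have : i = n + 1 := by omega
            rw [this]; exact hg
        rw [Xn_noexit φ f I (n + 1) (qs s') hall]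
        simp [hqsdef]
      rw [hYq]
      simp only [hXqs, Phi, if_pos hg, wpF, stepP, if_pos hg]
      rw [← ENNReal.tsum_mul_right]
      exact tsum_congr fun s' => by ring
    · have hXqs : ∀ s', Xn φ f I (n + 1) (qs s') = f (q (n + 1)) := by
        intro s'
        rw [Xn_exit φ f I (n + 1) (qs s') (k := n + 1) le_rfl
          (by rw [hqsq s' (n + 1) le_rfl]; exact hg)
          (fun i hi => by rw [hqsq s' i (by omega)]; exact hA i (by omega)),
          hqsq s' (n + 1) le_rfl]
      rw [hYq]
      simp only [hXqs, Phi, if_neg hg]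
      calc ∑' s', f (q (n + 1)) * (p * (stepP φ μ (q (n + 1)) s' : ℝ≥0∞))
          = (f (q (n + 1)) * p) * ∑' s', (stepP φ μ (q (n + 1)) s' : ℝ≥0∞) := by
            rw [← ENNReal.tsum_mul_left]; exact tsum_congr fun s' => by ring
        _ = f (q (n + 1)) * p := by rw [hstep, mul_one]

/-- **Relating `X^{f,I}` and `Φ_f`.** The `G_n`-measurable function `X_n^{f,Φ_f(I)}` is a
version of the conditional expectation of `X_{n+1}^{f,I}` given `G_n` under `P_s`. -/
theorem Xn_condExp {S : Type*} [Countable S] [MeasurableSpace S] [DiscreteMeasurableSpace S]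
    (φ : Set S) (μ : S → S → ℝ≥0) (hμ : ∀ s, ∑' s', μ s s' = 1)
    (P : S → Measure (ℕ → S)) (hP : ∀ s, IsProbabilityMeasure (P s))
    (hPC : ∀ (s : S) (π : List S), π ≠ [] → P s (Cyl π) = (prefP φ μ s π : ℝ≥0∞))
    (f I : S → ℝ≥0∞) (n : ℕ) (s : S) :
    Measurable[Gn n] (Xn φ f (Phi φ μ f I) n) ∧
    ∀ G : Set (ℕ → S), MeasurableSet[Gn n] G →
      ∫⁻ ϑ in G, Xn φ f I (n + 1) ϑ ∂(P s) =
        ∫⁻ ϑ in G, Xn φ f (Phi φ μ f I) n ϑ ∂(P s) := by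
  classical
  have hmeas : Measurable[Gn n] (Xn φ f (Phi φ μ f I) n) := by
    have hrep : Xn φ f (Phi φ μ f I) n =
        (fun w : Fin (n + 2) → S => Xn φ f (Phi φ μ f I) n
          (fun i => if h : i < n + 2 then w ⟨i, h⟩ else w ⟨0, by omega⟩)) ∘ projN (n + 2) := by
      funext ϑ
      refine Xn_congr φ f _ n (fun i hi => ?_)
      show ϑ i = if h : i < n + 2 then projN (n + 2) ϑ ⟨i, h⟩
        else projN (n + 2) ϑ ⟨0, by omega⟩
      rw [dif_pos (by omega : i < n + 2)]
      rfl
    rw [hrep]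
    intro B hB
    rw [Set.preimage_comp]
    exact gn_measurableSet_preimage n _
  refine ⟨hmeas, fun G hG => ?_⟩
  obtain ⟨A, rfl⟩ := gn_eq_preimage hG
  rw [← Set.iUnion_of_singleton_coe A, Set.preimage_iUnion]
  have hdisj : Pairwise (Function.onFun Disjoint fun v : A =>
      projN (S := S) (n + 2) ⁻¹' {(v : Fin (n + 2) → S)}) := by
    intro a b hab
    simp only [Function.onFun, Set.disjoint_left]
    intro ϑ h1 h2
    exact hab (Subtype.ext ((show projN (n + 2) ϑ = a from h1).symm.trans h2))
  rw [lintegral_iUnion (fun v => measurableSet_projN_preimage _ _) hdisj,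
    lintegral_iUnion (fun v => measurableSet_projN_preimage _ _) hdisj]
  exact tsum_congr fun v => key_cyl_eq φ μ hμ P hPC f I n s v
end

section
/- For all expectations f and I, every n ∈ ℕ and every initial state s ∈ Σ, the expected value of the induced process equals the (n+1)-fold iterate of the characteristic function applied to I: ∫_Ω X_n^{f,I} dP_s = Φ_f^{n+1}(I)(s). -/
open MeasureTheory Filter Topology
open scoped Classical ENNReal ENat NNReal

/-! Loop model: states `S`, guard `φ : Set S`, loop-body transition probabilities
`μ : S → S → ℝ≥0`. Expectations are functions `S → ℝ≥0∞` with the pointwise order. -/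

variable {S : Type*}

/-! ### Auxiliary development -/

section AuxLoop

variable {S : Type*}

lemma loopT_eq_coe (φ : Set S) (ϑ : ℕ → S) (m : ℕ) (h : ϑ m ∉ φ)
    (hmin : ∀ k < m, ϑ k ∈ φ) : loopT φ ϑ = (m : ℕ∞) := by
  refine le_antisymm (sInf_le ⟨m, rfl, h⟩) (le_sInf ?_)
  rintro n ⟨k, rfl, hk⟩
  exact_mod_cast Nat.le_of_not_lt fun hlt => hk (hmin k hlt)

lemma loopT_eq_top (φ : Set S) (ϑ : ℕ → S) (h : ∀ m, ϑ m ∈ φ) : loopT φ ϑ = ⊤ := by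
  unfold loopT
  refine (congrArg sInf (?_ : _ = (∅ : Set ℕ∞))).trans sInf_empty
  ext n
  simp only [Set.mem_setOf_eq, Set.mem_empty_iff_false, iff_false, not_exists]
  rintro m ⟨rfl, hm⟩
  exact hm (h m)

lemma Xn_zero (φ : Set S) (f I : S → ℝ≥0∞) (ϑ : ℕ → S) :
    Xn φ f I 0 ϑ = if ϑ 0 ∈ φ then I (ϑ 1) else f (ϑ 0) := by
  by_cases h0 : ϑ 0 ∈ φ
  · rw [if_pos h0]
    by_cases hex : ∃ m, ϑ m ∉ φ
    · have hm := Nat.find_spec hex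
      have hmin : ∀ k < Nat.find hex, ϑ k ∈ φ := fun k hk => not_not.mp (Nat.find_min hex hk)
      have hpos : 0 < Nat.find hex := by
        rcases Nat.eq_zero_or_pos (Nat.find hex) with h | h
        · exact absurd (h ▸ hm) (not_not.mpr h0)
        · exact h
      rw [Xn, loopT_eq_coe φ ϑ _ hm hmin,
        if_neg (by exact_mod_cast Nat.not_le.mpr hpos)]
    · push_neg at hex
      rw [Xn, loopT_eq_top φ ϑ hex, if_neg (by simp)]
  · rw [if_neg h0, Xn, loopT_eq_coe φ ϑ 0 h0 (by omega), if_pos (by simp)]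
    simp

lemma Xn_succ (φ : Set S) (f I : S → ℝ≥0∞) (n : ℕ) (ϑ : ℕ → S) :
    Xn φ f I (n + 1) ϑ = if ϑ 0 ∈ φ then Xn φ f I n (fun k => ϑ (k + 1)) else f (ϑ 0) := by
  by_cases h0 : ϑ 0 ∈ φ
  · rw [if_pos h0]
    by_cases hex : ∃ k, ϑ (k + 1) ∉ φ
    · have hk := Nat.find_spec hex
      have hkmin : ∀ j < Nat.find hex, ϑ (j + 1) ∈ φ :=
        fun j hj => not_not.mp (Nat.find_min hex hj)
      set k := Nat.find hex with hkdef
      have h1 : loopT φ ϑ = ((k + 1 : ℕ) : ℕ∞) := by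
        refine loopT_eq_coe φ ϑ (k + 1) hk ?_
        intro j hj
        cases j with
        | zero => exact h0
        | succ i => exact hkmin i (by omega)
      have h2 : loopT φ (fun m => ϑ (m + 1)) = (k : ℕ∞) := loopT_eq_coe φ _ k hk hkmin
      rw [Xn, Xn, h1, h2]
      by_cases hkn : k ≤ n
      · rw [if_pos (by exact_mod_cast Nat.succ_le_succ hkn), if_pos (by exact_mod_cast hkn)]
        have e1 : (((k + 1 : ℕ)) : ℕ∞).toNat = k + 1 := ENat.toNat_coe (k + 1)
        have e2 : ((k : ℕ) : ℕ∞).toNat = k := ENat.toNat_coe k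
        rw [e1, e2]
      · rw [if_neg (by exact_mod_cast fun h => hkn (Nat.succ_le_succ_iff.mp h)),
          if_neg (by exact_mod_cast hkn)]
    · push_neg at hex
      have hall : ∀ m, ϑ m ∈ φ := by
        intro m
        cases m with
        | zero => exact h0
        | succ i => exact hex i
      rw [Xn, Xn, loopT_eq_top φ ϑ hall, loopT_eq_top φ _ hex,
        if_neg (fun hle => ENat.coe_ne_top (n + 1) (top_le_iff.mp hle)),
        if_neg (fun hle => ENat.coe_ne_top n (top_le_iff.mp hle))]
  · rw [if_neg h0, Xn, loopT_eq_coe φ ϑ 0 h0 (by omega), if_pos (by simp)]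
    simp

/-- Finite-dimensional version of `Xn`: depends only on the first `n + 2` states. -/
noncomputable def XnV (φ : Set S) (f I : S → ℝ≥0∞) : (n : ℕ) → (Fin (n + 2) → S) → ℝ≥0∞
  | 0, v => if v 0 ∈ φ then I (v 1) else f (v 0)
  | n + 1, v => if v 0 ∈ φ then XnV φ f I n (Fin.tail v) else f (v 0)

lemma Xn_eq_XnV (φ : Set S) (f I : S → ℝ≥0∞) :
    ∀ (n : ℕ) (ϑ : ℕ → S), Xn φ f I n ϑ = XnV φ f I n (fun i : Fin (n + 2) => ϑ i) := by
  intro n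
  induction n with
  | zero =>
    intro ϑ
    rw [Xn_zero, XnV]
    simp only [Fin.val_zero, Fin.val_one]
  | succ n ih =>
    intro ϑ
    rw [Xn_succ, ih, XnV]
    have : Fin.tail (fun i : Fin (n + 3) => ϑ i) = fun i : Fin (n + 2) => ϑ (i + 1) := by
      funext i
      simp [Fin.tail, Fin.val_succ]
    rw [this]
    simp only [Fin.val_zero]
    rfl

/-- The cylinder of a vector of states. -/
def cylV {k : ℕ} (v : Fin k → S) : Set (ℕ → S) := {ϑ | ∀ i : Fin k, ϑ i = v i}

lemma cylV_eq_Cyl {k : ℕ} (v : Fin k → S) : cylV v = Cyl (List.ofFn v) := by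
  ext ϑ
  simp only [cylV, Cyl, Set.mem_setOf_eq, List.get_ofFn]
  constructor
  · intro h i
    have := h (Fin.cast (by simp) i)
    simpa using this
  · intro h i
    have := h (Fin.cast (by simp) i : Fin (List.ofFn v).length)
    simpa using this

lemma measurable_cylV [MeasurableSpace S] [DiscreteMeasurableSpace S] {k : ℕ}
    (v : Fin k → S) : MeasurableSet (cylV v) := by
  have : cylV v = ⋂ i : Fin k, (fun ϑ : ℕ → S => ϑ i) ⁻¹' {v i} := by
    ext ϑ; simp [cylV]
  rw [this]
  exact MeasurableSet.iInter fun i => (measurable_pi_apply _) (measurableSet_singleton _)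

lemma lintegral_restrict {S : Type*} [Countable S] [MeasurableSpace S]
    [DiscreteMeasurableSpace S] (P : MeasureTheory.Measure (ℕ → S)) (k : ℕ)
    (G : (Fin k → S) → ℝ≥0∞) :
    ∫⁻ ϑ, G (fun i => ϑ i) ∂P = ∑' v : Fin k → S, G v * P (cylV v) := by
  have h1 : ∀ ϑ : ℕ → S,
      G (fun i => ϑ i) = ∑' v : Fin k → S, (cylV v).indicator (fun _ => G v) ϑ := by
    intro ϑ
    rw [tsum_eq_single (fun i : Fin k => ϑ i) ?_]
    · rw [Set.indicator_of_mem]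
      intro i; rfl
    · intro w hw
      rw [Set.indicator_of_notMem]
      intro hmem
      exact hw (funext fun i => (hmem i).symm)
  calc ∫⁻ ϑ, G (fun i => ϑ i) ∂P
      = ∫⁻ ϑ, ∑' v : Fin k → S, (cylV v).indicator (fun _ => G v) ϑ ∂P :=
        MeasureTheory.lintegral_congr h1
    _ = ∑' v : Fin k → S, ∫⁻ ϑ, (cylV v).indicator (fun _ => G v) ϑ ∂P :=
        MeasureTheory.lintegral_tsum fun v =>
          (measurable_const.indicator (measurable_cylV v)).aemeasurable
    _ = ∑' v : Fin k → S, G v * P (cylV v) := by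
        refine tsum_congr fun v => ?_
        rw [MeasureTheory.lintegral_indicator (measurable_cylV v),
          MeasureTheory.setLIntegral_const]

lemma ofFn_cons {k : ℕ} (a : S) (w : Fin k → S) :
    List.ofFn (Fin.cons a w) = a :: List.ofFn w := by
  rw [List.ofFn_succ]
  simp

lemma chainP_ofFn_cons (φ : Set S) (μ : S → S → ℝ≥0) {k : ℕ} (a : S) (w : Fin (k + 1) → S) :
    chainP φ μ (List.ofFn (Fin.cons a w)) = stepP φ μ a (w 0) * chainP φ μ (List.ofFn w) := by
  have hw : List.ofFn w = w 0 :: List.ofFn fun i => w i.succ := List.ofFn_succ (f := w)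
  rw [ofFn_cons, hw]
  simp [chainP]

lemma chainP_ofFn_one (φ : Set S) (μ : S → S → ℝ≥0) (w : Fin 1 → S) :
    chainP φ μ (List.ofFn w) = 1 := by
  rw [List.ofFn_succ]
  simp [chainP]

lemma prefP_ofFn_cons (φ : Set S) (μ : S → S → ℝ≥0) {k : ℕ} (s a : S) (w : Fin (k + 1) → S) :
    prefP φ μ s (List.ofFn (Fin.cons a w)) =
      (if a = s then 1 else 0) * chainP φ μ (List.ofFn (Fin.cons a w)) := by
  unfold prefP
  congr 1
  rw [ofFn_cons]
  simp

lemma tsum_cons {k : ℕ} (F : (Fin (k + 1) → S) → ℝ≥0∞) :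
    ∑' v : Fin (k + 1) → S, F v = ∑' (a : S), ∑' (u : Fin k → S), F (Fin.cons a u) := by
  rw [← (Fin.consEquiv (fun _ : Fin (k + 1) => S)).tsum_eq F, ← ENNReal.tsum_prod]
  rfl

lemma tsum_ite_collapse (s : S) (g : S → ℝ≥0∞) :
    ∑' a : S, (if a = s then (1 : ℝ≥0∞) else 0) * g a = g s := by
  rw [tsum_eq_single s (fun b hb => by rw [if_neg hb, zero_mul])]
  rw [if_pos rfl, one_mul]

lemma coe_ind (c : Prop) [Decidable c] :
    ((if c then (1 : ℝ≥0) else 0 : ℝ≥0) : ℝ≥0∞) = if c then 1 else 0 := by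
  split_ifs <;> simp

lemma sum_step (φ : Set S) (μ : S → S → ℝ≥0) (hμ : ∀ s, ∑' s', μ s s' = 1) (s : S) :
    ∑' b : S, (stepP φ μ s b : ℝ≥0∞) = 1 := by
  by_cases hs : s ∈ φ
  · simp only [stepP, hs, if_true]
    have hsum : Summable (μ s) := by
      by_contra h
      have := hμ s
      rw [tsum_eq_zero_of_not_summable h] at this
      exact absurd this (by norm_num)
    rw [← ENNReal.coe_tsum hsum, hμ s, ENNReal.coe_one]
  · simp only [stepP, hs, if_false]
    simp only [coe_ind]
    exact tsum_ite_eq s 1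

lemma sum_chain (φ : Set S) (μ : S → S → ℝ≥0) (hμ : ∀ s, ∑' s', μ s s' = 1) :
    ∀ (k : ℕ) (s : S),
      ∑' u : Fin (k + 1) → S, (chainP φ μ (List.ofFn (Fin.cons s u)) : ℝ≥0∞) = 1 := by
  intro k
  induction k with
  | zero =>
    intro s
    rw [tsum_cons (fun u => (chainP φ μ (List.ofFn (Fin.cons s u)) : ℝ≥0∞))]
    have : ∀ b : S, ∑' t : Fin 0 → S,
        (chainP φ μ (List.ofFn (Fin.cons s (Fin.cons b t))) : ℝ≥0∞)
          = (stepP φ μ s b : ℝ≥0∞) := by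
      intro b
      rw [tsum_eq_single (fun i : Fin 0 => i.elim0)
        (fun c hc => absurd (funext fun i => i.elim0) hc)]
      rw [chainP_ofFn_cons, chainP_ofFn_one]
      simp
    rw [tsum_congr this]
    exact sum_step φ μ hμ s
  | succ k ih =>
    intro s
    rw [tsum_cons (fun u => (chainP φ μ (List.ofFn (Fin.cons s u)) : ℝ≥0∞))]
    have : ∀ b : S, ∑' t : Fin (k + 1) → S,
        (chainP φ μ (List.ofFn (Fin.cons s (Fin.cons b t))) : ℝ≥0∞)
          = (stepP φ μ s b : ℝ≥0∞) := by
      intro b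
      have : ∀ t : Fin (k + 1) → S,
          (chainP φ μ (List.ofFn (Fin.cons s (Fin.cons b t))) : ℝ≥0∞)
            = (stepP φ μ s b : ℝ≥0∞) * (chainP φ μ (List.ofFn (Fin.cons b t)) : ℝ≥0∞) := by
        intro t
        rw [chainP_ofFn_cons]
        simp [ENNReal.coe_mul]
      rw [tsum_congr this, ENNReal.tsum_mul_left, ih b, mul_one]
    rw [tsum_congr this]
    exact sum_step φ μ hμ s

lemma key_sum (φ : Set S) (μ : S → S → ℝ≥0) (hμ : ∀ s, ∑' s', μ s s' = 1)
    (f I : S → ℝ≥0∞) :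
    ∀ (n : ℕ) (s : S),
      ∑' u : Fin (n + 1) → S,
        (chainP φ μ (List.ofFn (Fin.cons s u)) : ℝ≥0∞) * XnV φ f I n (Fin.cons s u)
        = (Phi φ μ f)^[n + 1] I s := by
  intro n
  induction n with
  | zero =>
    intro s
    rw [tsum_cons (fun u => (chainP φ μ (List.ofFn (Fin.cons s u)) : ℝ≥0∞) *
      XnV φ f I 0 (Fin.cons s u))]
    have hin : ∀ b : S, ∑' t : Fin 0 → S,
        (chainP φ μ (List.ofFn (Fin.cons s (Fin.cons b t))) : ℝ≥0∞) *
          XnV φ f I 0 (Fin.cons s (Fin.cons b t))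
        = (stepP φ μ s b : ℝ≥0∞) * (if s ∈ φ then I b else f s) := by
      intro b
      rw [tsum_eq_single (fun i : Fin 0 => i.elim0)
        (fun c hc => absurd (funext fun i => i.elim0) hc)]
      rw [chainP_ofFn_cons, chainP_ofFn_one]
      have hv : XnV φ f I 0 (Fin.cons s (Fin.cons b (fun i : Fin 0 => i.elim0)))
          = if s ∈ φ then I b else f s := by
        rw [XnV]
        rfl
      rw [hv]
      simp
    rw [tsum_congr hin, Function.iterate_one]
    by_cases hs : s ∈ φ
    · simp only [hs, if_true, Phi, wpF]
      refine tsum_congr fun b => ?_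
      simp [stepP, hs]
    · simp only [hs, if_false, Phi]
      have : ∀ b : S, (stepP φ μ s b : ℝ≥0∞) * f s
          = (if b = s then (1:ℝ≥0∞) else 0) * f s := by
        intro b
        simp [stepP, hs, coe_ind]
      rw [tsum_congr this, ENNReal.tsum_mul_right, tsum_ite_eq s (fun _ => (1:ℝ≥0∞)), one_mul]
  | succ n ih =>
    intro s
    rw [tsum_cons (fun u => (chainP φ μ (List.ofFn (Fin.cons s u)) : ℝ≥0∞) *
      XnV φ f I (n + 1) (Fin.cons s u))]
    have hv : ∀ (b : S) (t : Fin (n + 1) → S),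
        XnV φ f I (n + 1) (Fin.cons s (Fin.cons b t))
          = if s ∈ φ then XnV φ f I n (Fin.cons b t) else f s := by
      intro b t
      rw [XnV]
      simp [Fin.tail_cons]
    have hin : ∀ b : S, ∑' t : Fin (n + 1) → S,
        (chainP φ μ (List.ofFn (Fin.cons s (Fin.cons b t))) : ℝ≥0∞) *
          XnV φ f I (n + 1) (Fin.cons s (Fin.cons b t))
        = (stepP φ μ s b : ℝ≥0∞) * ∑' t : Fin (n + 1) → S,
            (chainP φ μ (List.ofFn (Fin.cons b t)) : ℝ≥0∞) *
              (if s ∈ φ then XnV φ f I n (Fin.cons b t) else f s) := by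
      intro b
      rw [← ENNReal.tsum_mul_left]
      refine tsum_congr fun t => ?_
      rw [chainP_ofFn_cons φ μ s (Fin.cons b t), hv b t]
      simp only [Fin.cons_zero, ENNReal.coe_mul]
      ring
    rw [tsum_congr hin]
    by_cases hs : s ∈ φ
    · simp only [hs, if_true]
      have : ∀ b : S, (stepP φ μ s b : ℝ≥0∞) * ∑' t : Fin (n + 1) → S,
          (chainP φ μ (List.ofFn (Fin.cons b t)) : ℝ≥0∞) * XnV φ f I n (Fin.cons b t)
          = (μ s b : ℝ≥0∞) * (Phi φ μ f)^[n + 1] I b := by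
        intro b
        rw [ih b]
        simp [stepP, hs]
      rw [tsum_congr this]
      rw [Function.iterate_succ_apply' (Phi φ μ f) (n + 1) I]
      simp only [Phi, hs, if_true, wpF]
    · simp only [hs, if_false]
      have : ∀ b : S, (stepP φ μ s b : ℝ≥0∞) * ∑' t : Fin (n + 1) → S,
          (chainP φ μ (List.ofFn (Fin.cons b t)) : ℝ≥0∞) * f s
          = (if b = s then (1:ℝ≥0∞) else 0) * f s := by
        intro b
        rw [ENNReal.tsum_mul_right, sum_chain φ μ hμ n b, one_mul]
        simp [stepP, hs, coe_ind]
      rw [tsum_congr this, ENNReal.tsum_mul_right, tsum_ite_eq s (fun _ => (1:ℝ≥0∞)), one_mul]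
      rw [Function.iterate_succ_apply' (Phi φ μ f) (n + 1) I]
      simp only [Phi, hs, if_false]

end AuxLoop

/-- **Expected values of the induced process are iterates of `Φ_f`:**
`E_s[X_n^{f,I}] = Φ_f^{n+1}(I)(s)`. -/
theorem Xn_expectation {S : Type*} [Countable S] [MeasurableSpace S] [DiscreteMeasurableSpace S]
    (φ : Set S) (μ : S → S → ℝ≥0) (hμ : ∀ s, ∑' s', μ s s' = 1)
    (P : S → Measure (ℕ → S)) (hP : ∀ s, IsProbabilityMeasure (P s))
    (hPC : ∀ (s : S) (π : List S), π ≠ [] → P s (Cyl π) = (prefP φ μ s π : ℝ≥0∞))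
    (f I : S → ℝ≥0∞) (n : ℕ) (s : S) :
    ∫⁻ ϑ, Xn φ f I n ϑ ∂(P s) = (Phi φ μ f)^[n + 1] I s := by
  have step1 : ∫⁻ ϑ, Xn φ f I n ϑ ∂(P s)
      = ∫⁻ ϑ, XnV φ f I n (fun i : Fin (n + 2) => ϑ i) ∂(P s) :=
    MeasureTheory.lintegral_congr fun ϑ => Xn_eq_XnV φ f I n ϑ
  rw [step1, lintegral_restrict (P s) (n + 2) (XnV φ f I n)]
  have step2 : ∀ v : Fin (n + 2) → S,
      XnV φ f I n v * P s (cylV v)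
        = XnV φ f I n v * (prefP φ μ s (List.ofFn v) : ℝ≥0∞) := by
    intro v
    rw [cylV_eq_Cyl, hPC s (List.ofFn v) (by
      intro h
      have := congrArg List.length h
      simp at this)]
  rw [tsum_congr step2,
    tsum_cons (fun v => XnV φ f I n v * (prefP φ μ s (List.ofFn v) : ℝ≥0∞))]
  have step3 : ∀ a : S, ∑' u : Fin (n + 1) → S,
      XnV φ f I n (Fin.cons a u) * (prefP φ μ s (List.ofFn (Fin.cons a u)) : ℝ≥0∞)
      = (if a = s then (1:ℝ≥0∞) else 0) * ∑' u : Fin (n + 1) → S,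
          (chainP φ μ (List.ofFn (Fin.cons a u)) : ℝ≥0∞) * XnV φ f I n (Fin.cons a u) := by
    intro a
    rw [← ENNReal.tsum_mul_left]
    refine tsum_congr fun u => ?_
    rw [prefP_ofFn_cons, ENNReal.coe_mul, coe_ind]
    ring
  rw [tsum_congr step3, tsum_ite_collapse s, key_sum φ μ hμ f I n s]
end

section
/- Let I be a finite expectation that harmonizes with f. Then for every n ∈ ℕ and every initial state s ∈ Σ, the G_n-measurable function X_n^{0,ΔI} (the process induced by the pair of expectations 0 and ΔI) is a version of the conditional expectation of |X_{n+1}^{f,I} − X_n^{f,I}| given G_n under P_s; that is, for every G ∈ G_n, ∫_G |X_{n+1}^{f,I} − X_n^{f,I}| dP_s = ∫_G X_n^{0,ΔI} dP_s. -/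
open MeasureTheory Filter Topology
open scoped Classical ENNReal ENat NNReal

/-! Loop model: states `S`, guard `φ : Set S`, loop-body transition probabilities
`μ : S → S → ℝ≥0`. Expectations are functions `S → ℝ≥0∞` with the pointwise order. -/

variable {S : Type*}

section AuxHelpers

variable {S : Type*}

lemma mem_cyl_ofFn {m : ℕ} (v : Fin m → S) (ϑ : ℕ → S) :
    ϑ ∈ Cyl (List.ofFn v) ↔ ∀ i : Fin m, ϑ i = v i := by
  constructor
  · intro h i
    have := h (Fin.cast (List.length_ofFn : (List.ofFn v).length = m).symm i)
    simpa [List.get_ofFn] using this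
  · intro h i
    have := h (Fin.cast (List.length_ofFn : (List.ofFn v).length = m) i)
    simp [List.get_ofFn] at this; rw [List.get_ofFn]; exact this

lemma exists_ofFn {m : ℕ} (π : List S) (h : π.length = m) :
    ∃ w : Fin m → S, π = List.ofFn w := by
  subst h; exact ⟨π.get, (List.ofFn_get π).symm⟩

lemma ofFn_snoc' {m : ℕ} (v : Fin m → S) (b : S) :
    List.ofFn (Fin.snoc v b) = List.ofFn v ++ [b] := by
  rw [List.ofFn_succ']
  simp [List.concat_eq_append, Fin.snoc_castSucc, Fin.snoc_last]

lemma measurable_of_fibers {Ω β γ : Type*} (m : MeasurableSpace Ω) [MeasurableSpace γ]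
    [Countable β] (r : Ω → β) (hr : ∀ v, MeasurableSet[m] (r ⁻¹' {v})) (G : β → γ) :
    Measurable[m] (G ∘ r) := by
  intro B _
  have : (G ∘ r) ⁻¹' B = ⋃ v ∈ G ⁻¹' B, r ⁻¹' {v} := by
    ext ϑ; simp
  rw [this]
  exact MeasurableSet.biUnion (Set.to_countable _) fun v _ => hr v

lemma measurableSet_cyl [MeasurableSpace S] [MeasurableSingletonClass S] (π : List S) :
    MeasurableSet (Cyl π) := by
  have : Cyl π = ⋂ i : Fin π.length, (fun ϑ : ℕ → S => ϑ i) ⁻¹' {π.get i} := by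
    ext ϑ; simp [Cyl]
  rw [this]
  exact MeasurableSet.iInter fun i =>
    (measurable_pi_apply (i : ℕ)) (measurableSet_singleton _)

lemma measurableSet_Gn_cyl_ofFn (n : ℕ) (v : Fin (n + 2) → S) :
    MeasurableSet[Gn n] (Cyl (List.ofFn v)) :=
  MeasurableSpace.measurableSet_generateFrom ⟨List.ofFn v, by simp, rfl⟩

lemma loopT_le_iff (φ : Set S) (ϑ : ℕ → S) (k : ℕ) :
    loopT φ ϑ ≤ (k : ℕ∞) ↔ ∃ m ≤ k, ϑ m ∉ φ := by
  constructor
  · intro h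
    rcases Set.eq_empty_or_nonempty {n : ℕ∞ | ∃ m : ℕ, n = (m : ℕ∞) ∧ ϑ m ∉ φ} with he | hne
    · rw [loopT, he, sInf_empty] at h
      exact absurd h (by simp)
    · obtain ⟨m, hm, hmφ⟩ := csInf_mem hne
      rw [loopT, hm] at h
      exact ⟨m, by exact_mod_cast h, hmφ⟩
  · rintro ⟨m, hm, hmφ⟩
    exact le_trans (sInf_le ⟨m, rfl, hmφ⟩) (by exact_mod_cast hm)

lemma all_in_of_not_loopT_le {φ : Set S} {ϑ : ℕ → S} {k : ℕ}
    (h : ¬ loopT φ ϑ ≤ (k : ℕ∞)) : ∀ i ≤ k, ϑ i ∈ φ := by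
  intro i hi
  by_contra hc
  exact h ((loopT_le_iff φ ϑ k).mpr ⟨i, hi, hc⟩)

lemma absDiff_Xn (φ : Set S) (f I : S → ℝ≥0∞) (hharm : Harmonizes φ I f) (n : ℕ)
    (ϑ : ℕ → S) :
    (Xn φ f I (n + 1) ϑ - Xn φ f I n ϑ) ⊔ (Xn φ f I n ϑ - Xn φ f I (n + 1) ϑ)
      = if ∀ i ≤ n + 1, ϑ i ∈ φ then
          (I (ϑ (n + 2)) - I (ϑ (n + 1))) ⊔ (I (ϑ (n + 1)) - I (ϑ (n + 2))) else 0 := by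
  by_cases h1 : loopT φ ϑ ≤ (n : ℕ∞)
  · have h2 : loopT φ ϑ ≤ ((n + 1 : ℕ) : ℕ∞) :=
      le_trans h1 (by exact_mod_cast Nat.le_succ n)
    obtain ⟨m, hm, hmφ⟩ := (loopT_le_iff φ ϑ n).mp h1
    rw [Xn, if_pos h2, Xn, if_pos h1, if_neg]
    · simp
    · push_neg
      exact ⟨m, le_trans hm (Nat.le_succ n), hmφ⟩
  · by_cases h2 : loopT φ ϑ ≤ ((n + 1 : ℕ) : ℕ∞)
    · have hout : ϑ (n + 1) ∉ φ := by
        obtain ⟨m, hm, hmφ⟩ := (loopT_le_iff φ ϑ (n + 1)).mp h2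
        have hmn : ¬ m ≤ n := fun hle => h1 ((loopT_le_iff φ ϑ n).mpr ⟨m, hle, hmφ⟩)
        have : m = n + 1 := le_antisymm hm (not_le.mp hmn)
        rwa [← this]
      have heq : loopT φ ϑ = ((n + 1 : ℕ) : ℕ∞) := by
        refine le_antisymm h2 ?_
        have hlt : (n : ℕ∞) < loopT φ ϑ := lt_of_not_ge h1
        have : (n : ℕ∞) + 1 ≤ loopT φ ϑ := Order.add_one_le_of_lt hlt
        exact_mod_cast this
      rw [Xn, if_pos h2, Xn, if_neg h1, heq]
      simp only [ENat.toNat_coe]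
      rw [hharm _ hout, if_neg]
      · simp
      · push_neg
        exact ⟨n + 1, le_refl _, hout⟩
    · have hall : ∀ i ≤ n + 1, ϑ i ∈ φ := all_in_of_not_loopT_le h2
      rw [Xn, if_neg h2, Xn, if_neg h1, if_pos hall]

lemma Xn_zero_dExp (φ : Set S) (μ : S → S → ℝ≥0) (I : S → ℝ≥0∞) (n : ℕ) (ϑ : ℕ → S) :
    Xn φ (fun _ => 0) (dExp φ μ I) n ϑ
      = if ∀ i ≤ n + 1, ϑ i ∈ φ then dExp φ μ I (ϑ (n + 1)) else 0 := by
  by_cases h1 : loopT φ ϑ ≤ (n : ℕ∞)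
  · rw [Xn, if_pos h1, if_neg]
    obtain ⟨m, hm, hmφ⟩ := (loopT_le_iff φ ϑ n).mp h1
    push_neg
    exact ⟨m, hm.trans (Nat.le_succ n), hmφ⟩
  · rw [Xn, if_neg h1]
    by_cases h2 : ϑ (n + 1) ∈ φ
    · rw [if_pos]
      intro i hi
      rcases Nat.lt_or_ge i (n + 1) with h | h
      · exact all_in_of_not_loopT_le h1 i (Nat.lt_succ_iff.mp h)
      · have : i = n + 1 := le_antisymm hi h
        rwa [this]
    · rw [if_neg, dExp, if_neg h2]
      push_neg
      exact ⟨n + 1, le_refl _, h2⟩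

lemma chainP_snoc (φ : Set S) (μ : S → S → ℝ≥0) (π : List S) (a b : S) :
    chainP φ μ ((a :: π) ++ [b])
      = chainP φ μ (a :: π) * stepP φ μ ((a :: π).getLast (by simp)) b := by
  induction π generalizing a with
  | nil => simp [chainP]
  | cons c rest ih =>
    have he : (a :: c :: rest) ++ [b] = a :: ((c :: rest) ++ [b]) := by simp
    rw [he]
    have h1 : chainP φ μ (a :: ((c :: rest) ++ [b]))
        = stepP φ μ a c * chainP φ μ ((c :: rest) ++ [b]) := by
      simp [chainP]
    rw [h1, ih c, chainP]
    rw [List.getLast_cons (by simp : (c :: rest) ≠ [])]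
    ring

lemma prefP_snoc (φ : Set S) (μ : S → S → ℝ≥0) (s : S) (π : List S) (hπ : π ≠ [])
    (b : S) :
    prefP φ μ s (π ++ [b]) = prefP φ μ s π * stepP φ μ (π.getLast hπ) b := by
  obtain ⟨a, π', rfl⟩ := List.exists_cons_of_ne_nil hπ
  rw [prefP, prefP, chainP_snoc]
  have : ((a :: π') ++ [b]).head? = some a := by simp
  rw [this]
  simp only [List.head?_cons]
  split_ifs <;> simp_all

end AuxHelpers

/-- **Expected change of `I`.** If the finite expectation `I` harmonizes with `f`, then
the `G_n`-measurable function `X_n^{0,ΔI}` is a version of the conditional expectation of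
`|X_{n+1}^{f,I} − X_n^{f,I}|` given `G_n` under `P_s`. -/
theorem expected_change_of_invariant {S : Type*} [Countable S] [MeasurableSpace S] [DiscreteMeasurableSpace S]
    (φ : Set S) (μ : S → S → ℝ≥0) (hμ : ∀ s, ∑' s', μ s s' = 1)
    (P : S → Measure (ℕ → S)) (hP : ∀ s, IsProbabilityMeasure (P s))
    (hPC : ∀ (s : S) (π : List S), π ≠ [] → P s (Cyl π) = (prefP φ μ s π : ℝ≥0∞))
    (f I : S → ℝ≥0∞) (hIfin : FinExp I) (hharm : Harmonizes φ I f) (n : ℕ) (s : S) :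
    Measurable[Gn n] (Xn φ (fun _ => 0) (dExp φ μ I) n) ∧
    ∀ G : Set (ℕ → S), MeasurableSet[Gn n] G →
      ∫⁻ ϑ in G,
          ((Xn φ f I (n + 1) ϑ - Xn φ f I n ϑ) ⊔ (Xn φ f I n ϑ - Xn φ f I (n + 1) ϑ))
        ∂(P s)
      = ∫⁻ ϑ in G, Xn φ (fun _ => 0) (dExp φ μ I) n ϑ ∂(P s) := by
  classical
  set r : (ℕ → S) → (Fin (n + 2) → S) := fun ϑ i => ϑ i with hrdef
  have hfiber : ∀ v : Fin (n + 2) → S, r ⁻¹' {v} = Cyl (List.ofFn v) := by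
    intro v; ext ϑ
    simp only [Set.mem_preimage, Set.mem_singleton_iff]
    constructor
    · intro h
      exact (mem_cyl_ofFn v ϑ).mpr fun i => congrFun h i
    · intro h
      exact funext fun i => (mem_cyl_ofFn v ϑ).mp h i
  have hcond : ∀ (ϑ : ℕ → S) (v : Fin (n + 2) → S), (∀ i : Fin (n + 2), ϑ i = v i) →
      ((∀ i ≤ n + 1, ϑ i ∈ φ) ↔ ∀ i : Fin (n + 2), v i ∈ φ) := by
    intro ϑ v h
    constructor
    · intro hall i
      rw [← h i]
      exact hall i (Nat.lt_succ_iff.mp i.isLt)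
    · intro hall i hi
      have := h ⟨i, Nat.lt_succ_of_le hi⟩
      rw [this]
      exact hall _
  constructor
  · have hcomp : Xn φ (fun _ => 0) (dExp φ μ I) n =
        (fun w : Fin (n + 2) → S =>
          if ∀ i : Fin (n + 2), w i ∈ φ then dExp φ μ I (w (Fin.last (n + 1))) else 0) ∘ r := by
      funext ϑ
      rw [Xn_zero_dExp]
      simp only [Function.comp_apply]
      have hiff := hcond ϑ (r ϑ) (fun i => rfl)
      rw [if_congr hiff rfl rfl]
      rfl
    rw [hcomp]
    exact measurable_of_fibers (Gn n) r
      (fun v => (hfiber v).symm ▸ measurableSet_Gn_cyl_ofFn n v) _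
  · intro G hG
    have hle : Gn n ≤ MeasurableSpace.comap r ⊤ := by
      rw [Gn, Fn]
      apply MeasurableSpace.generateFrom_le
      rintro A ⟨π, hπ, rfl⟩
      obtain ⟨w, rfl⟩ := exists_ofFn π hπ
      exact ⟨{w}, trivial, hfiber w⟩
    obtain ⟨A, -, rfl⟩ := MeasurableSpace.measurableSet_comap.mp (hle G hG)
    have hGeq : r ⁻¹' A = ⋃ v : A, Cyl (List.ofFn (v : Fin (n + 2) → S)) := by
      ext ϑ
      simp only [Set.mem_preimage, Set.mem_iUnion]
      constructor
      · intro h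
        exact ⟨⟨r ϑ, h⟩, (mem_cyl_ofFn _ _).mpr fun i => rfl⟩
      · rintro ⟨⟨v, hv⟩, hϑ⟩
        have : r ϑ = v := funext fun i => (mem_cyl_ofFn _ _).mp hϑ i
        rwa [this]
    have hdisj : Pairwise (Function.onFun Disjoint
        fun v : A => Cyl (List.ofFn (v : Fin (n + 2) → S))) := by
      rintro ⟨v, hv⟩ ⟨w, hw⟩ hvw
      have hne : v ≠ w := fun h => hvw (Subtype.ext h)
      refine Set.disjoint_left.mpr fun ϑ hϑv hϑw => hne (funext fun i => ?_)
      rw [← (mem_cyl_ofFn v ϑ).mp hϑv i, (mem_cyl_ofFn w ϑ).mp hϑw i]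
    rw [hGeq, lintegral_iUnion (fun v => measurableSet_cyl _) hdisj,
      lintegral_iUnion (fun v => measurableSet_cyl _) hdisj]
    refine tsum_congr fun ⟨v, hv⟩ => ?_
    by_cases hvφ : ∀ i : Fin (n + 2), v i ∈ φ
    · -- all states inside the guard
      set a := v (Fin.last (n + 1)) with ha
      have hne : List.ofFn v ≠ [] := by simp
      have haφ : a ∈ φ := hvφ _
      -- RHS computation
      have hgconst : ∀ ϑ ∈ Cyl (List.ofFn v),
          Xn φ (fun _ => 0) (dExp φ μ I) n ϑ = dExp φ μ I a := by
        intro ϑ hϑ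
        rw [Xn_zero_dExp,
          if_pos ((hcond ϑ v ((mem_cyl_ofFn v ϑ).mp hϑ)).mpr hvφ)]
        exact congrArg (dExp φ μ I) ((mem_cyl_ofFn v ϑ).mp hϑ (Fin.last (n + 1)))
      have hRHS : ∫⁻ ϑ in Cyl (List.ofFn v), Xn φ (fun _ => 0) (dExp φ μ I) n ϑ ∂(P s)
          = dExp φ μ I a * P s (Cyl (List.ofFn v)) := by
        rw [setLIntegral_congr_fun (measurableSet_cyl _) hgconst,
          setLIntegral_const]
      -- decompose the cylinder
      have hsplit : Cyl (List.ofFn v) = ⋃ b : S, Cyl (List.ofFn (Fin.snoc v b)) := by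
        ext ϑ
        simp only [Set.mem_iUnion, mem_cyl_ofFn]
        constructor
        · intro h
          refine ⟨ϑ (n + 2), fun i => ?_⟩
          induction i using Fin.lastCases with
          | last => simp [Fin.snoc_last]
          | cast j => simpa [Fin.snoc_castSucc] using h j
        · rintro ⟨b, h⟩ i
          have := h (Fin.castSucc i)
          simpa [Fin.snoc_castSucc] using this
      have hdisj2 : Pairwise (Function.onFun Disjoint
          fun b : S => Cyl (List.ofFn (Fin.snoc v b))) := by
        intro b c hbc
        refine Set.disjoint_left.mpr fun ϑ hb hc => hbc ?_
        have h1 := (mem_cyl_ofFn _ ϑ).mp hb (Fin.last (n + 2))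
        have h2 := (mem_cyl_ofFn _ ϑ).mp hc (Fin.last (n + 2))
        rw [Fin.snoc_last] at h1 h2
        rw [← h1, h2]
      have hPsnoc : ∀ b : S, P s (Cyl (List.ofFn (Fin.snoc v b)))
          = (prefP φ μ s (List.ofFn v) : ℝ≥0∞) * (μ a b : ℝ≥0∞) := by
        intro b
        rw [ofFn_snoc', hPC s _ (by simp), prefP_snoc φ μ s _ hne b]
        have hlast : (List.ofFn v).getLast hne = a := by
          rw [List.getLast_ofFn]
          congr 1
        rw [hlast, stepP, if_pos haφ]
        push_cast
        ring
      have hLHS : ∫⁻ ϑ in Cyl (List.ofFn v),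
          ((Xn φ f I (n + 1) ϑ - Xn φ f I n ϑ) ⊔ (Xn φ f I n ϑ - Xn φ f I (n + 1) ϑ)) ∂(P s)
          = ∑' b : S, ((I b - I a) ⊔ (I a - I b))
              * ((prefP φ μ s (List.ofFn v) : ℝ≥0∞) * (μ a b : ℝ≥0∞)) := by
        rw [hsplit, lintegral_iUnion (fun b => measurableSet_cyl _) hdisj2]
        refine tsum_congr fun b => ?_
        have hfconst : ∀ ϑ ∈ Cyl (List.ofFn (Fin.snoc v b)),
            ((Xn φ f I (n + 1) ϑ - Xn φ f I n ϑ) ⊔ (Xn φ f I n ϑ - Xn φ f I (n + 1) ϑ))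
              = (I b - I a) ⊔ (I a - I b) := by
          intro ϑ hϑ
          have hcoords := (mem_cyl_ofFn _ ϑ).mp hϑ
          have hn2 : ϑ (n + 2) = b := by
            have := hcoords (Fin.last (n + 2))
            rw [Fin.snoc_last] at this
            exact this
          have hn1 : ϑ (n + 1) = a := by
            have := hcoords (Fin.castSucc (Fin.last (n + 1)))
            rw [Fin.snoc_castSucc] at this
            exact this
          have hallin : ∀ i ≤ n + 1, ϑ i ∈ φ := by
            intro i hi
            have := hcoords (Fin.castSucc ⟨i, Nat.lt_succ_of_le hi⟩)
            rw [Fin.snoc_castSucc] at this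
            rw [show ((Fin.castSucc (⟨i, Nat.lt_succ_of_le hi⟩ : Fin (n + 2)) : Fin (n + 3)) : ℕ)
              = i from rfl] at this
            rw [this]
            exact hvφ _
          rw [absDiff_Xn φ f I hharm n ϑ, if_pos hallin, hn1, hn2]
        rw [setLIntegral_congr_fun (measurableSet_cyl _) hfconst,
          setLIntegral_const, hPsnoc b]
      rw [hLHS, hRHS, hPC s _ hne, dExp, if_pos haφ, ← ENNReal.tsum_mul_right]
      exact tsum_congr fun b => by ring
    · -- some state outside the guard: both integrands vanish
      have hzero : ∀ ϑ ∈ Cyl (List.ofFn v), ¬ (∀ i ≤ n + 1, ϑ i ∈ φ) := by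
        intro ϑ hϑ hall
        exact hvφ ((hcond ϑ v ((mem_cyl_ofFn v ϑ).mp hϑ)).mp hall)
      have hz1 : ∀ ϑ ∈ Cyl (List.ofFn v),
          ((Xn φ f I (n + 1) ϑ - Xn φ f I n ϑ) ⊔ (Xn φ f I n ϑ - Xn φ f I (n + 1) ϑ))
            = (0 : ℝ≥0∞) := fun ϑ hϑ => by
        rw [absDiff_Xn φ f I hharm n ϑ, if_neg (hzero ϑ hϑ)]
      have hz2 : ∀ ϑ ∈ Cyl (List.ofFn v),
          Xn φ (fun _ => 0) (dExp φ μ I) n ϑ = (0 : ℝ≥0∞) := fun ϑ hϑ => by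
        rw [Xn_zero_dExp, if_neg (hzero ϑ hϑ)]
      rw [setLIntegral_congr_fun (measurableSet_cyl _) hz1,
        setLIntegral_congr_fun (measurableSet_cyl _) hz2]
end
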